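/- Let ν, κ ∈ ℝ with ν² ≠ κ² and κ ≠ 0, and let β ∈ ℂ satisfy β² = κ² − ν² and β ≠ −κ. Define Ψ_M(r) := κ·r^β·(κ+β, −ν) and Ψ_U(r) := r^{−β}·(ν, −κ−β) for r > 0. Then Ψ_M and Ψ_U both satisfy d^{ν,κ}Ψ = 0 on (0,∞), and every differentiable function f : (0,∞) → ℂ² with d^{ν,κ}f = 0 on (0,∞) is of the form f = a·Ψ_M + b·Ψ_U for some constants a, b ∈ ℂ. -/

import Mathlib

open Complex

/-- `IsDiracSol ν κ lam f₁ f₂` says that `f = (f₁, f₂) : (0,∞) → ℂ²` is differentiable on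
`(0,∞)` and satisfies the Coulomb–Dirac equation `d^{ν,κ} f = lam • f` there. -/
def IsDiracSol (ν κ : ℝ) (lam : ℂ) (f₁ f₂ : ℝ → ℂ) : Prop :=
  ∀ r : ℝ, 0 < r →
    DifferentiableAt ℝ f₁ r ∧ DifferentiableAt ℝ f₂ r ∧
    -((ν : ℂ) / (r : ℂ)) * f₁ r - deriv f₂ r - ((κ : ℂ) / (r : ℂ)) * f₂ r = lam * f₁ r ∧
    deriv f₁ r - ((κ : ℂ) / (r : ℂ)) * f₁ r - ((ν : ℂ) / (r : ℂ)) * f₂ r = lam * f₂ r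

/-- For `r > 0` and `β ∈ ℂ`, `r^β := exp (β · ln r)`. -/
noncomputable def rpowC (r : ℝ) (β : ℂ) : ℂ := Complex.exp (β * Real.log r)

lemma rpowC_hasDerivAt (γ : ℂ) {r : ℝ} (hr : 0 < r) :
    HasDerivAt (fun s => rpowC s γ) (γ / r * rpowC r γ) r := by
  have h1 : HasDerivAt (fun s : ℝ => ((Real.log s : ℝ) : ℂ)) ((r⁻¹ : ℝ) : ℂ) r :=
    (Real.hasDerivAt_log hr.ne').ofReal_comp
  have h2 := (h1.const_mul γ).cexp
  convert h2 using 1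
  unfold rpowC
  push_cast
  ring
  unfold rpowC
  push_cast
  ring

lemma rpowC_ne_zero (r : ℝ) (γ : ℂ) : rpowC r γ ≠ 0 := Complex.exp_ne_zero _

lemma rpowC_mul_neg (r : ℝ) (γ : ℂ) : rpowC r γ * rpowC r (-γ) = 1 := by
  unfold rpowC
  rw [← Complex.exp_add]
  ring_nf
  exact Complex.exp_zero

lemma sol_aux (ν κ : ℝ) (γ c₁ c₂ : ℂ)
    (h1 : (ν : ℂ) * c₁ + (γ + κ) * c₂ = 0) (h2 : (γ - κ) * c₁ - ν * c₂ = 0) :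
    IsDiracSol ν κ 0 (fun r => rpowC r γ * c₁) (fun r => rpowC r γ * c₂) := by
  intro r hr
  have hr' : (r : ℂ) ≠ 0 := by exact_mod_cast hr.ne'
  have hd1 := (rpowC_hasDerivAt γ hr).mul_const c₁
  have hd2 := (rpowC_hasDerivAt γ hr).mul_const c₂
  refine ⟨hd1.differentiableAt, hd2.differentiableAt, ?_, ?_⟩
  · rw [hd2.deriv]
    field_simp
    linear_combination -rpowC r γ * h1
  · rw [hd1.deriv]
    field_simp
    linear_combination rpowC r γ * h2

lemma const_of_deriv_zero_Ioi (W : ℝ → ℂ) (h : ∀ r : ℝ, 0 < r → HasDerivAt W 0 r) :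
    ∀ r : ℝ, 0 < r → W r = W 1 := by
  intro r hr
  refine (convex_Ioi (0:ℝ)).is_const_of_fderivWithin_eq_zero (f := W)
    (fun x hx => ((h x hx).differentiableAt).differentiableWithinAt) ?_ hr (by norm_num)
  intro x hx
  rw [((h x hx).hasFDerivAt).hasFDerivWithinAt.fderivWithin (isOpen_Ioi.uniqueDiffWithinAt hx)]
  ext
  simp

lemma wronskian_const (ν κ : ℝ) (f₁ f₂ g₁ g₂ : ℝ → ℂ)
    (hf : IsDiracSol ν κ 0 f₁ f₂) (hg : IsDiracSol ν κ 0 g₁ g₂) :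
    ∀ r : ℝ, 0 < r → f₁ r * g₂ r - f₂ r * g₁ r = f₁ 1 * g₂ 1 - f₂ 1 * g₁ 1 := by
  apply const_of_deriv_zero_Ioi
  intro r hr
  obtain ⟨hf1, hf2, ef1, ef2⟩ := hf r hr
  obtain ⟨hg1, hg2, eg1, eg2⟩ := hg r hr
  have hr' : (r : ℂ) ≠ 0 := by exact_mod_cast hr.ne'
  have H := ((hf1.hasDerivAt.mul hg2.hasDerivAt).sub (hf2.hasDerivAt.mul hg1.hasDerivAt))
  refine H.congr_deriv ?_
  have df1 : deriv f₁ r = (κ / r) * f₁ r + (ν / r) * f₂ r := by linear_combination ef2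
  have df2 : deriv f₂ r = -(ν / r) * f₁ r - (κ / r) * f₂ r := by linear_combination -ef1
  have dg1 : deriv g₁ r = (κ / r) * g₁ r + (ν / r) * g₂ r := by linear_combination eg2
  have dg2 : deriv g₂ r = -(ν / r) * g₁ r - (κ / r) * g₂ r := by linear_combination -eg1
  rw [df1, df2, dg1, dg2]
  ring

/-- For `ν² ≠ κ²`, `κ ≠ 0`, `β² = κ² − ν²`, `β ≠ −κ`, the functions
`Ψ_M(r) = κ r^β (κ+β, −ν)` and `Ψ_U(r) = r^{−β} (ν, −κ−β)` solve `d^{ν,κ}Ψ = 0` on `(0,∞)`,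
and every differentiable solution of `d^{ν,κ}f = 0` on `(0,∞)` is a linear combination
`f = a Ψ_M + b Ψ_U`. -/
theorem fundamental_solutions_generic (ν κ : ℝ) (hne : ν ^ 2 ≠ κ ^ 2) (hκ : κ ≠ 0)
    (β : ℂ) (hβ : β ^ 2 = (κ : ℂ) ^ 2 - (ν : ℂ) ^ 2) (hβκ : β ≠ -(κ : ℂ)) :
    IsDiracSol ν κ 0 (fun r => (κ : ℂ) * rpowC r β * ((κ : ℂ) + β))
      (fun r => (κ : ℂ) * rpowC r β * (-(ν : ℂ))) ∧
    IsDiracSol ν κ 0 (fun r => rpowC r (-β) * (ν : ℂ))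
      (fun r => rpowC r (-β) * (-(κ : ℂ) - β)) ∧
    ∀ f₁ f₂ : ℝ → ℂ, IsDiracSol ν κ 0 f₁ f₂ →
      ∃ a b : ℂ, ∀ r : ℝ, 0 < r →
        f₁ r = a * ((κ : ℂ) * rpowC r β * ((κ : ℂ) + β)) + b * (rpowC r (-β) * (ν : ℂ)) ∧
        f₂ r = a * ((κ : ℂ) * rpowC r β * (-(ν : ℂ))) + b * (rpowC r (-β) * (-(κ : ℂ) - β)) := by
  have hκC : (κ : ℂ) ≠ 0 := by exact_mod_cast hκ
  have hνκC : (κ : ℂ) ^ 2 - (ν : ℂ) ^ 2 ≠ 0 := by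
    intro h
    apply hne
    have : ((ν ^ 2 - κ ^ 2 : ℝ) : ℂ) = 0 := by push_cast; linear_combination -h
    have := Complex.ofReal_eq_zero.mp this
    linarith
  have hβ0 : β ≠ 0 := by
    intro h; apply hνκC; rw [← hβ, h]; ring
  have hβκ' : β + κ ≠ 0 := by
    intro h; exact hβκ (by linear_combination h)
  have hM : IsDiracSol ν κ 0 (fun r => rpowC r β * ((κ : ℂ) * (κ + β)))
      (fun r => rpowC r β * (-(κ : ℂ) * ν)) := by
    apply sol_aux
    · ring
    · linear_combination (κ : ℂ) * hβ
  have hU : IsDiracSol ν κ 0 (fun r => rpowC r (-β) * (ν : ℂ))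
      (fun r => rpowC r (-β) * (-(κ : ℂ) - β)) := by
    apply sol_aux
    · linear_combination hβ
    · ring
  have hMfun1 : (fun r => (κ : ℂ) * rpowC r β * ((κ : ℂ) + β))
      = (fun r => rpowC r β * ((κ : ℂ) * (κ + β))) := by funext r; ring
  have hMfun2 : (fun r => (κ : ℂ) * rpowC r β * (-(ν : ℂ)))
      = (fun r => rpowC r β * (-(κ : ℂ) * ν)) := by funext r; ring
  have hM' : IsDiracSol ν κ 0 (fun r => (κ : ℂ) * rpowC r β * ((κ : ℂ) + β))
      (fun r => (κ : ℂ) * rpowC r β * (-(ν : ℂ))) := by rw [hMfun1, hMfun2]; exact hM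
  refine ⟨hM', hU, ?_⟩
  intro f₁ f₂ hf
  set w₀ : ℂ := -2 * κ * β * (β + κ) with hw₀def
  have hw₀ : w₀ ≠ 0 := by
    simp only [hw₀def]
    intro h
    rcases mul_eq_zero.mp h with h | h
    · rcases mul_eq_zero.mp h with h | h
      · rcases mul_eq_zero.mp h with h | h
        · norm_num at h
        · exact hκC h
      · exact hβ0 h
    · exact hβκ' h
  set cU : ℂ := f₁ 1 * (rpowC 1 (-β) * (-(κ : ℂ) - β)) - f₂ 1 * (rpowC 1 (-β) * (ν : ℂ)) with hcUdef
  set cM : ℂ := f₁ 1 * (rpowC 1 β * (-(κ : ℂ) * ν)) - f₂ 1 * (rpowC 1 β * ((κ : ℂ) * (κ + β))) with hcMdef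
  have hWU := wronskian_const ν κ f₁ f₂ _ _ hf hU
  have hWM := wronskian_const ν κ f₁ f₂ _ _ hf hM
  refine ⟨cU / w₀, -cM / w₀, ?_⟩
  intro r hr
  have hEF := rpowC_mul_neg r β
  have h1 := hWU r hr
  have h2 := hWM r hr
  rw [← hcUdef] at h1
  rw [← hcMdef] at h2
  have key1 : f₁ r * w₀ = cU * ((κ:ℂ) * rpowC r β * (κ + β)) - cM * (rpowC r (-β) * ν) := by
    linear_combination ((κ:ℂ) * rpowC r β * (κ + β)) * h1 - (rpowC r (-β) * (ν:ℂ)) * h2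
      + (f₁ r * κ * (((κ:ℂ)+β)^2 - (ν:ℂ)^2)) * hEF - (f₁ r * κ) * hβ
  have key2 : f₂ r * w₀ = cU * ((κ:ℂ) * rpowC r β * (-(ν:ℂ))) - cM * (rpowC r (-β) * (-(κ:ℂ) - β)) := by
    linear_combination ((κ:ℂ) * rpowC r β * (-(ν:ℂ))) * h1 - (rpowC r (-β) * (-(κ:ℂ) - β)) * h2
      + (f₂ r * κ * (((κ:ℂ)+β)^2 - (ν:ℂ)^2)) * hEF - (f₂ r * κ) * hβ
  constructor
  · field_simp
    linear_combination key1
  · have hinv : w₀ * w₀⁻¹ = 1 := mul_inv_cancel₀ hw₀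
    linear_combination key2 / w₀ - f₂ r * hinv
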